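/- Fix real numbers σα > 0, σβ > 0 and z₀ > 0. Then, as λ → ∞, the quantity λ⁻² · log ( ∬_{{(a,b) ∈ [0,∞)² : √2 · √(a² + b²) > z₀ λ}} (4ab/(σα² σβ²)) · exp(−a²/σα² − b²/σβ²) da db ) converges to −z₀²/(2 · max(σα², σβ²)). -/

import Mathlib

open MeasureTheory Filter Topology Set

noncomputable def ldpF (σα σβ : ℝ) : ℝ × ℝ → ℝ := fun p =>
  4 * p.1 * p.2 / (σα ^ 2 * σβ ^ 2) *
    Real.exp (-(p.1 ^ 2) / σα ^ 2 - p.2 ^ 2 / σβ ^ 2)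

def ldpE (z₀ lam : ℝ) : Set (ℝ × ℝ) :=
  {p : ℝ × ℝ | 0 ≤ p.1 ∧ 0 ≤ p.2 ∧ z₀ * lam < Real.sqrt 2 * Real.sqrt (p.1 ^ 2 + p.2 ^ 2)}

lemma aux_integral_Ioi (b : ℝ) (hb : 0 < b) :
    ∫ x in Set.Ioi (0:ℝ), x * Real.exp (-b * x^2) = (2*b)⁻¹ := by
  have hderiv : ∀ x ∈ Set.Ici (0:ℝ),
      HasDerivAt (fun x : ℝ => -(2*b)⁻¹ * Real.exp (-b * x^2))
        (x * Real.exp (-b * x^2)) x := by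
    intro x _
    have h1 : HasDerivAt (fun x : ℝ => -b * x^2) (-b * (2 * x^1)) x :=
      (hasDerivAt_pow 2 x).const_mul (-b)
    have h2 := (h1.exp).const_mul (-(2*b)⁻¹)
    refine h2.congr_deriv ?_
    have hinv : (2*b)⁻¹ * (2*b) = 1 := inv_mul_cancel₀ (by positivity)
    linear_combination (x * Real.exp (-b * x^2)) * hinv
  have hint : IntegrableOn (fun x : ℝ => x * Real.exp (-b * x^2)) (Set.Ioi 0) :=
    (integrable_mul_exp_neg_mul_sq hb).integrableOn
  have htend : Tendsto (fun x : ℝ => -(2*b)⁻¹ * Real.exp (-b * x^2)) atTop (𝓝 0) := by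
    have h4 : Tendsto (fun x : ℝ => b * x^2) atTop atTop :=
      (tendsto_pow_atTop (n := 2) two_ne_zero).const_mul_atTop hb
    have h5 : Tendsto (fun x : ℝ => -b * x^2) atTop atBot := by
      simpa [neg_mul] using tendsto_neg_atBot_iff.mpr h4
    have h6 : Tendsto (fun x : ℝ => Real.exp (-b * x^2)) atTop (𝓝 0) :=
      Real.tendsto_exp_atBot.comp h5
    simpa using h6.const_mul (-(2*b)⁻¹)
  have := integral_Ioi_of_hasDerivAt_of_tendsto' hderiv hint htend
  rw [this]
  simp

lemma aux_integrable (C b : ℝ) (hb : 0 < b) :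
    Integrable (fun x : ℝ => C * (x * Real.exp (-b * x^2))) :=
  (integrable_mul_exp_neg_mul_sq hb).const_mul C

lemma aux_integral_Ici (C b : ℝ) (hb : 0 < b) :
    ∫ x in Set.Ici (0:ℝ), C * (x * Real.exp (-b * x^2)) = C * (2*b)⁻¹ := by
  rw [MeasureTheory.integral_Ici_eq_integral_Ioi, integral_const_mul,
    aux_integral_Ioi b hb]

lemma ldpF_eq (σα σβ : ℝ) : ldpF σα σβ = fun p : ℝ × ℝ =>
    ((2/σα^2) * (p.1 * Real.exp (-(1/σα^2) * p.1^2))) *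
      ((2/σβ^2) * (p.2 * Real.exp (-(1/σβ^2) * p.2^2))) := by
  funext p
  show 4 * p.1 * p.2 / (σα ^ 2 * σβ ^ 2) *
    Real.exp (-(p.1 ^ 2) / σα ^ 2 - p.2 ^ 2 / σβ ^ 2) = _
  have e1 : -(p.1^2)/σα^2 - p.2^2/σβ^2 = (-(1/σα^2) * p.1^2) + (-(1/σβ^2) * p.2^2) := by
    ring
  rw [e1, Real.exp_add]
  ring

lemma ldpF_integrable {σα σβ : ℝ} (hσα : 0 < σα) (hσβ : 0 < σβ) :
    Integrable (ldpF σα σβ) := by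
  rw [ldpF_eq, MeasureTheory.Measure.volume_eq_prod]
  exact (aux_integrable (2/σα^2) (1/σα^2) (by positivity)).mul_prod
    (aux_integrable (2/σβ^2) (1/σβ^2) (by positivity))

lemma ldpF_nonneg {σα σβ : ℝ} (p : ℝ × ℝ) (h1 : 0 ≤ p.1) (h2 : 0 ≤ p.2) :
    0 ≤ ldpF σα σβ p := by
  unfold ldpF
  positivity

lemma ldpE_measurable (z₀ lam : ℝ) : MeasurableSet (ldpE z₀ lam) := by
  have : ldpE z₀ lam = {p : ℝ × ℝ | 0 ≤ p.1} ∩ ({p : ℝ × ℝ | 0 ≤ p.2} ∩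
      {p : ℝ × ℝ | z₀ * lam < Real.sqrt 2 * Real.sqrt (p.1 ^ 2 + p.2 ^ 2)}) := rfl
  rw [this]
  refine (measurableSet_le measurable_const measurable_fst).inter
    ((measurableSet_le measurable_const measurable_snd).inter
      (measurableSet_lt measurable_const ?_))
  fun_prop

lemma lower_aux {σ1 σ2 : ℝ} (u v : ℝ) (h1 : 0 < σ1) (h2 : 0 < σ2) (hu : 1 ≤ u) (hv : 1 ≤ v) :
    4/(σ1^2*σ2^2) * Real.exp (-((u+1)^2)/σ1^2 - (v+1)^2/σ2^2)
      ≤ ∫ p in Set.Icc u (u+1) ×ˢ Set.Icc v (v+1), ldpF σ1 σ2 p := by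
  set S := Set.Icc u (u+1) ×ˢ Set.Icc v (v+1) with hS
  have hSm : MeasurableSet S := measurableSet_Icc.prod measurableSet_Icc
  have hvol : volume S = 1 := by
    rw [hS, MeasureTheory.Measure.volume_eq_prod, Measure.prod_prod, Real.volume_Icc, Real.volume_Icc]
    norm_num
  set c := 4/(σ1^2*σ2^2) * Real.exp (-((u+1)^2)/σ1^2 - (v+1)^2/σ2^2) with hc
  have hconst : IntegrableOn (fun _ : ℝ × ℝ => c) S := by
    exact integrableOn_const (by rw [hvol]; exact ENNReal.one_ne_top)
  have hfint : IntegrableOn (ldpF σ1 σ2) S := (ldpF_integrable h1 h2).integrableOn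
  have hle : ∀ p ∈ S, c ≤ ldpF σ1 σ2 p := by
    rintro p ⟨hp1, hp2⟩
    rw [Set.mem_Icc] at hp1 hp2
    have h01 : (0:ℝ) ≤ p.1 := le_trans (by linarith) hp1.1
    have h02 : (0:ℝ) ≤ p.2 := le_trans (by linarith) hp2.1
    show c ≤ 4 * p.1 * p.2 / (σ1 ^ 2 * σ2 ^ 2) *
      Real.exp (-(p.1 ^ 2) / σ1 ^ 2 - p.2 ^ 2 / σ2 ^ 2)
    rw [hc]
    have hnum : (4:ℝ) ≤ 4 * p.1 * p.2 := by nlinarith [hp1.1, hp2.1]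
    have hx1 : p.1^2 ≤ (u+1)^2 := by nlinarith [hp1.2]
    have hx2 : p.2^2 ≤ (v+1)^2 := by nlinarith [hp2.2]
    have harg : -((u+1)^2)/σ1^2 - (v+1)^2/σ2^2 ≤ -(p.1^2)/σ1^2 - p.2^2/σ2^2 := by
      have b1 : p.1^2/σ1^2 ≤ (u+1)^2/σ1^2 := by gcongr
      have b2 : p.2^2/σ2^2 ≤ (v+1)^2/σ2^2 := by gcongr
      have e1 : -((u+1)^2)/σ1^2 = -((u+1)^2/σ1^2) := by ring
      have e2 : -(p.1^2)/σ1^2 = -(p.1^2/σ1^2) := by ring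
      rw [e1, e2]
      linarith
    have h4c : (0:ℝ) < σ1^2*σ2^2 := by positivity
    refine mul_le_mul ?_ (Real.exp_le_exp.mpr harg) (Real.exp_pos _).le (by positivity)
    exact div_le_div_of_nonneg_right hnum h4c.le |>.trans_eq rfl
  have hmono := MeasureTheory.setIntegral_mono_on hconst hfint hSm hle
  rw [MeasureTheory.setIntegral_const, measureReal_def, hvol] at hmono
  simpa using hmono
set_option maxHeartbeats 2000000 in
theorem ell2_LDP (σα σβ z₀ : ℝ) (hσα : 0 < σα) (hσβ : 0 < σβ) (hz₀ : 0 < z₀) :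
    Tendsto (fun lam : ℝ =>
      (lam ^ 2)⁻¹ * Real.log (∫ p in {p : ℝ × ℝ |
            0 ≤ p.1 ∧ 0 ≤ p.2 ∧ z₀ * lam < Real.sqrt 2 * Real.sqrt (p.1 ^ 2 + p.2 ^ 2)},
        4 * p.1 * p.2 / (σα ^ 2 * σβ ^ 2) *
          Real.exp (-(p.1 ^ 2) / σα ^ 2 - p.2 ^ 2 / σβ ^ 2)))
      atTop (𝓝 (-(z₀ ^ 2) / (2 * max (σα ^ 2) (σβ ^ 2)))) := by
  have h2 : (0:ℝ) < Real.sqrt 2 := Real.sqrt_pos.mpr (by norm_num)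
  set M := max (σα ^ 2) (σβ ^ 2) with hMdef
  set m := min (σα ^ 2) (σβ ^ 2) with hmdef
  have hM : 0 < M := lt_of_lt_of_le (pow_pos hσα 2) (le_max_left _ _)
  have hm : 0 < m := lt_min (pow_pos hσα 2) (pow_pos hσβ 2)
  have hαM : σα ^ 2 ≤ M := le_max_left _ _
  have hβM : σβ ^ 2 ≤ M := le_max_right _ _
  set q := z₀ / Real.sqrt 2 with hq
  have hq0 : 0 < q := div_pos hz₀ h2
  have hfInt : Integrable (ldpF σα σβ) := ldpF_integrable hσα hσβ
  have hcpos : (0:ℝ) < σα ^ 2 * σβ ^ 2 := by positivity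
  show Tendsto (fun lam : ℝ =>
      (lam ^ 2)⁻¹ * Real.log (∫ p in ldpE z₀ lam, ldpF σα σβ p))
    atTop (𝓝 (-(z₀ ^ 2) / (2 * M)))
  -- lower bound value
  have hLpos : ∀ lam : ℝ, 0 < 4/(σα^2*σβ^2) * Real.exp (-((q*lam+2)^2)/M - 4/m) :=
    fun lam => mul_pos (div_pos (by norm_num) hcpos) (Real.exp_pos _)
  -- lower bound on the integral
  have hlow : ∀ lam : ℝ, 1 ≤ lam →
      4/(σα^2*σβ^2) * Real.exp (-((q*lam+2)^2)/M - 4/m)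
        ≤ ∫ p in ldpE z₀ lam, ldpF σα σβ p := by
    intro lam hlam
    have hlam0 : (0:ℝ) < lam := lt_of_lt_of_le one_pos hlam
    have hr0 : 0 < q * lam := mul_pos hq0 hlam0
    have hsqrtr : Real.sqrt 2 * (q * lam) = z₀ * lam := by
      rw [hq]; field_simp
    have hfE : IntegrableOn (ldpF σα σβ) (ldpE z₀ lam) := hfInt.integrableOn
    have hnn : 0 ≤ᵐ[volume.restrict (ldpE z₀ lam)] (ldpF σα σβ) := by
      filter_upwards [ae_restrict_mem (ldpE_measurable z₀ lam)] with p hp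
      exact ldpF_nonneg p hp.1 hp.2.1
    rcases le_total σβ σα with hba | hab
    · have hMa : M = σα ^ 2 := max_eq_left (by nlinarith)
      have hma : m = σβ ^ 2 := min_eq_right (by nlinarith)
      have hsub : Set.Icc (q*lam+1) (q*lam+1+1) ×ˢ Set.Icc (1:ℝ) (1+1) ⊆ ldpE z₀ lam := by
        rintro p ⟨hp1, hp2⟩
        rw [Set.mem_Icc] at hp1 hp2
        have h01 : (0:ℝ) ≤ p.1 := by linarith
        have h02 : (0:ℝ) ≤ p.2 := by linarith
        refine ⟨h01, h02, ?_⟩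
        have hsq : q*lam + 1 ≤ Real.sqrt (p.1^2 + p.2^2) := by
          have hs := Real.sqrt_le_sqrt (by nlinarith : p.1^2 ≤ p.1^2 + p.2^2)
          rw [Real.sqrt_sq h01] at hs
          linarith
        calc z₀ * lam = Real.sqrt 2 * (q*lam) := hsqrtr.symm
          _ < Real.sqrt 2 * (q*lam+1) := by
              exact mul_lt_mul_of_pos_left (lt_add_one _) h2
          _ ≤ Real.sqrt 2 * Real.sqrt (p.1^2+p.2^2) :=
              mul_le_mul_of_nonneg_left hsq h2.le
      have hlow1 := lower_aux (q*lam+1) 1 hσα hσβ (by linarith) le_rfl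
      have hLeq : 4/(σα^2*σβ^2) * Real.exp (-((q*lam+2)^2)/M - 4/m)
          = 4/(σα^2*σβ^2) * Real.exp (-((q*lam+1+1)^2)/σα^2 - ((1:ℝ)+1)^2/σβ^2) := by
        rw [hMa, hma]
        congr 2
        ring
      rw [hLeq]
      exact le_trans hlow1 (setIntegral_mono_set hfE hnn (HasSubset.Subset.eventuallyLE hsub))
    · have hMa : M = σβ ^ 2 := max_eq_right (by nlinarith)
      have hma : m = σα ^ 2 := min_eq_left (by nlinarith)
      have hsub : Set.Icc (1:ℝ) (1+1) ×ˢ Set.Icc (q*lam+1) (q*lam+1+1) ⊆ ldpE z₀ lam := by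
        rintro p ⟨hp1, hp2⟩
        rw [Set.mem_Icc] at hp1 hp2
        have h01 : (0:ℝ) ≤ p.1 := by linarith
        have h02 : (0:ℝ) ≤ p.2 := by linarith
        refine ⟨h01, h02, ?_⟩
        have hsq : q*lam + 1 ≤ Real.sqrt (p.1^2 + p.2^2) := by
          have hs := Real.sqrt_le_sqrt (by nlinarith : p.2^2 ≤ p.1^2 + p.2^2)
          rw [Real.sqrt_sq h02] at hs
          linarith
        calc z₀ * lam = Real.sqrt 2 * (q*lam) := hsqrtr.symm
          _ < Real.sqrt 2 * (q*lam+1) := by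
              exact mul_lt_mul_of_pos_left (lt_add_one _) h2
          _ ≤ Real.sqrt 2 * Real.sqrt (p.1^2+p.2^2) :=
              mul_le_mul_of_nonneg_left hsq h2.le
      have hlow1 := lower_aux 1 (q*lam+1) hσα hσβ le_rfl (by linarith)
      have hLeq : 4/(σα^2*σβ^2) * Real.exp (-((q*lam+2)^2)/M - 4/m)
          = 4/(σα^2*σβ^2) * Real.exp (-(((1:ℝ)+1)^2)/σα^2 - (q*lam+1+1)^2/σβ^2) := by
        rw [hMa, hma]
        congr 2
        ring
      rw [hLeq]
      exact le_trans hlow1 (setIntegral_mono_set hfE hnn (HasSubset.Subset.eventuallyLE hsub))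
  -- upper bound on the integral
  have hup : ∀ lam : ℝ, 1 ≤ lam →
      (∫ p in ldpE z₀ lam, ldpF σα σβ p)
        ≤ Real.exp (-((1-lam⁻¹) * (z₀^2*lam^2/(2*M)))) * (lam * lam) := by
    intro lam hlam
    have hlam0 : (0:ℝ) < lam := lt_of_lt_of_le one_pos hlam
    have hs0 : (0:ℝ) < lam⁻¹ := inv_pos.mpr hlam0
    have hs1 : lam⁻¹ ≤ 1 := inv_le_one_of_one_le₀ hlam
    set K := Real.exp (-((1-lam⁻¹) * (z₀^2*lam^2/(2*M)))) with hK
    set P1 : ℝ → ℝ := fun x => (2/σα^2) * (x * Real.exp (-(lam⁻¹/σα^2) * x^2)) with hP1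
    set P2 : ℝ → ℝ := fun y => (2/σβ^2) * (y * Real.exp (-(lam⁻¹/σβ^2) * y^2)) with hP2
    have hP1i : Integrable P1 := aux_integrable _ _ (by positivity)
    have hP2i : Integrable P2 := aux_integrable _ _ (by positivity)
    have hGi : Integrable (fun p : ℝ × ℝ => P1 p.1 * P2 p.2) := by
      rw [MeasureTheory.Measure.volume_eq_prod]; exact hP1i.mul_prod hP2i
    have hbound : ∀ p ∈ ldpE z₀ lam, ldpF σα σβ p ≤ K * (P1 p.1 * P2 p.2) := by
      rintro p ⟨h01, h02, hlt⟩
      have hsum : z₀^2*lam^2/2 < p.1^2 + p.2^2 := by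
        rw [← Real.sqrt_mul (by norm_num : (0:ℝ) ≤ 2)] at hlt
        have h0 : 0 ≤ z₀ * lam := by positivity
        have hlt2 := (Real.lt_sqrt h0).mp hlt
        nlinarith
      have hX : z₀^2*lam^2/(2*M) ≤ p.1^2/σα^2 + p.2^2/σβ^2 := by
        have b1 : p.1^2/M ≤ p.1^2/σα^2 :=
          div_le_div_of_nonneg_left (sq_nonneg _) (pow_pos hσα 2) hαM
        have b2 : p.2^2/M ≤ p.2^2/σβ^2 :=
          div_le_div_of_nonneg_left (sq_nonneg _) (pow_pos hσβ 2) hβM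
        have b3 : (z₀^2*lam^2/2)/M ≤ (p.1^2+p.2^2)/M :=
          div_le_div_of_nonneg_right hsum.le hM.le
        rw [div_div] at b3
        rw [add_div] at b3
        linarith
      have hexp : Real.exp (-(p.1^2)/σα^2 - p.2^2/σβ^2)
          ≤ K * Real.exp (-(lam⁻¹/σα^2) * p.1^2 + -(lam⁻¹/σβ^2) * p.2^2) := by
        have earg : -(p.1^2)/σα^2 - p.2^2/σβ^2
            = -((1-lam⁻¹) * (p.1^2/σα^2 + p.2^2/σβ^2))
              + (-(lam⁻¹/σα^2) * p.1^2 + -(lam⁻¹/σβ^2) * p.2^2) := by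
          field_simp
          ring
        rw [earg, Real.exp_add, hK]
        apply mul_le_mul_of_nonneg_right _ (Real.exp_pos _).le
        apply Real.exp_le_exp.mpr
        have h1s : (0:ℝ) ≤ 1 - lam⁻¹ := by linarith
        exact neg_le_neg (mul_le_mul_of_nonneg_left hX h1s)
      have hmul := mul_le_mul_of_nonneg_left hexp
        (show (0:ℝ) ≤ 4*p.1*p.2/(σα^2*σβ^2) by positivity)
      calc ldpF σα σβ p
          = 4*p.1*p.2/(σα^2*σβ^2) * Real.exp (-(p.1^2)/σα^2 - p.2^2/σβ^2) := rfl
        _ ≤ 4*p.1*p.2/(σα^2*σβ^2) *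
              (K * Real.exp (-(lam⁻¹/σα^2) * p.1^2 + -(lam⁻¹/σβ^2) * p.2^2)) := hmul
        _ = K * (P1 p.1 * P2 p.2) := by
            rw [hP1, hP2, Real.exp_add]
            ring
    have hEQ : ldpE z₀ lam ⊆ Set.Ici (0:ℝ) ×ˢ Set.Ici (0:ℝ) :=
      fun p hp => ⟨hp.1, hp.2.1⟩
    have hGnn : 0 ≤ᵐ[volume.restrict (Set.Ici (0:ℝ) ×ˢ Set.Ici (0:ℝ))]
        (fun p : ℝ × ℝ => P1 p.1 * P2 p.2) := by
      filter_upwards [ae_restrict_mem (measurableSet_Ici.prod measurableSet_Ici)]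
        with p hp
      refine mul_nonneg ?_ ?_
      · exact mul_nonneg (by positivity) (mul_nonneg hp.1 (Real.exp_pos _).le)
      · exact mul_nonneg (by positivity) (mul_nonneg hp.2 (Real.exp_pos _).le)
    have hmono : (∫ p in ldpE z₀ lam, P1 p.1 * P2 p.2)
        ≤ ∫ p in Set.Ici (0:ℝ) ×ˢ Set.Ici (0:ℝ), P1 p.1 * P2 p.2 :=
      setIntegral_mono_set hGi.integrableOn hGnn (HasSubset.Subset.eventuallyLE hEQ)
    have hval : (∫ p in Set.Ici (0:ℝ) ×ˢ Set.Ici (0:ℝ), P1 p.1 * P2 p.2) = lam * lam := by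
      rw [MeasureTheory.Measure.volume_eq_prod]
      rw [setIntegral_prod_mul P1 P2]
      rw [hP1, hP2]
      rw [aux_integral_Ici (2/σα^2) (lam⁻¹/σα^2) (by positivity),
        aux_integral_Ici (2/σβ^2) (lam⁻¹/σβ^2) (by positivity)]
      field_simp
    calc (∫ p in ldpE z₀ lam, ldpF σα σβ p)
        ≤ ∫ p in ldpE z₀ lam, K * (P1 p.1 * P2 p.2) :=
          setIntegral_mono_on hfInt.integrableOn ((hGi.const_mul K).integrableOn)
            (ldpE_measurable z₀ lam) hbound
      _ = K * ∫ p in ldpE z₀ lam, P1 p.1 * P2 p.2 := integral_const_mul K _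
      _ ≤ K * ∫ p in Set.Ici (0:ℝ) ×ˢ Set.Ici (0:ℝ), P1 p.1 * P2 p.2 :=
          mul_le_mul_of_nonneg_left hmono (Real.exp_pos _).le
      _ = K * (lam * lam) := by rw [hval]
  -- squeeze
  have hFlb : ∀ᶠ lam in atTop,
      (lam ^ 2)⁻¹ * (Real.log (4/(σα^2*σβ^2)) + (-((q*lam+2)^2)/M - 4/m))
        ≤ (lam ^ 2)⁻¹ * Real.log (∫ p in ldpE z₀ lam, ldpF σα σβ p) := by
    filter_upwards [eventually_ge_atTop (1:ℝ)] with lam hlam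
    have hlog : Real.log (4/(σα^2*σβ^2)) + (-((q*lam+2)^2)/M - 4/m)
        ≤ Real.log (∫ p in ldpE z₀ lam, ldpF σα σβ p) := by
      have h1 := Real.log_le_log (hLpos lam) (hlow lam hlam)
      rw [Real.log_mul (by positivity) (Real.exp_ne_zero _), Real.log_exp] at h1
      linarith
    exact mul_le_mul_of_nonneg_left hlog (by positivity)
  have hFub : ∀ᶠ lam in atTop,
      (lam ^ 2)⁻¹ * Real.log (∫ p in ldpE z₀ lam, ldpF σα σβ p)
        ≤ (lam ^ 2)⁻¹ * (Real.log lam * 2 + -((1-lam⁻¹) * (z₀^2*lam^2/(2*M)))) := by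
    filter_upwards [eventually_ge_atTop (1:ℝ)] with lam hlam
    have hlam0 : (0:ℝ) < lam := lt_of_lt_of_le one_pos hlam
    have hIpos : 0 < ∫ p in ldpE z₀ lam, ldpF σα σβ p :=
      lt_of_lt_of_le (hLpos lam) (hlow lam hlam)
    have hlog : Real.log (∫ p in ldpE z₀ lam, ldpF σα σβ p)
        ≤ Real.log lam * 2 + -((1-lam⁻¹) * (z₀^2*lam^2/(2*M))) := by
      have h1 := Real.log_le_log hIpos (hup lam hlam)
      rw [Real.log_mul (Real.exp_ne_zero _) (mul_ne_zero hlam0.ne' hlam0.ne'),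
        Real.log_exp, Real.log_mul hlam0.ne' hlam0.ne'] at h1
      linarith
    exact mul_le_mul_of_nonneg_left hlog (by positivity)
  -- limits of the两 bounds
  have tinv : Tendsto (fun lam : ℝ => lam⁻¹) atTop (𝓝 0) := tendsto_inv_atTop_zero
  have tinv2 : Tendsto (fun lam : ℝ => (lam ^ 2)⁻¹) atTop (𝓝 0) := by
    have := tendsto_inv_atTop_zero.comp (tendsto_pow_atTop (α := ℝ) (n := 2) two_ne_zero)
    exact this
  have hLBtend : Tendsto (fun lam : ℝ =>
      (lam ^ 2)⁻¹ * (Real.log (4/(σα^2*σβ^2)) + (-((q*lam+2)^2)/M - 4/m)))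
      atTop (𝓝 (-(z₀ ^ 2) / (2 * M))) := by
    have base : Tendsto (fun lam : ℝ =>
        (lam ^ 2)⁻¹ * Real.log (4/(σα^2*σβ^2)) + (-((q + 2*lam⁻¹)^2)/M
          + (-4/m) * (lam ^ 2)⁻¹))
        atTop (𝓝 (0 * Real.log (4/(σα^2*σβ^2)) + (-((q + 2*0)^2)/M + (-4/m) * 0))) := by
      refine (tinv2.mul_const _).add (Tendsto.add ?_ (tinv2.const_mul _))
      exact (((tendsto_const_nhds.add (tinv.const_mul 2)).pow 2).neg).div_const M
    have hval : 0 * Real.log (4/(σα^2*σβ^2)) + (-((q + 2*0)^2)/M + (-4/m) * 0)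
        = -(z₀ ^ 2) / (2 * M) := by
      rw [hq]
      rw [mul_zero, add_zero, zero_mul, mul_zero, zero_add, add_zero, div_pow,
        Real.sq_sqrt (by norm_num : (0:ℝ) ≤ 2)]
      ring
    rw [hval] at base
    apply base.congr'
    filter_upwards [eventually_ge_atTop (1:ℝ)] with lam hlam
    have hlam0 : lam ≠ 0 := ne_of_gt (lt_of_lt_of_le one_pos hlam)
    field_simp
    ring
  have hUBtend : Tendsto (fun lam : ℝ =>
      (lam ^ 2)⁻¹ * (Real.log lam * 2 + -((1-lam⁻¹) * (z₀^2*lam^2/(2*M)))))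
      atTop (𝓝 (-(z₀ ^ 2) / (2 * M))) := by
    have hll : Tendsto (fun lam : ℝ => Real.log lam / lam) atTop (𝓝 0) := by
      simpa using Real.isLittleO_log_id_atTop.tendsto_div_nhds_zero
    have base : Tendsto (fun lam : ℝ =>
        (Real.log lam / lam * lam⁻¹) * 2 + -((1-lam⁻¹) * (z₀^2/(2*M))))
        atTop (𝓝 ((0 * 0) * 2 + -((1-0) * (z₀^2/(2*M))))) :=
      ((hll.mul tinv).mul_const 2).add
        (((tendsto_const_nhds.sub tinv).mul_const (z₀^2/(2*M))).neg)
    have hval : ((0:ℝ) * 0) * 2 + -((1-0) * (z₀^2/(2*M))) = -(z₀ ^ 2) / (2 * M) := by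
      ring
    rw [hval] at base
    apply base.congr'
    filter_upwards [eventually_ge_atTop (1:ℝ)] with lam hlam
    have hlam0 : lam ≠ 0 := ne_of_gt (lt_of_lt_of_le one_pos hlam)
    field_simp
  exact tendsto_of_tendsto_of_tendsto_of_le_of_le' hLBtend hUBtend hFlb hFub
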